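/- For all positive integers Λ, α, j with α ≤ Λ, the sum over i from 1 to α of C(Λ-α, j-i)·C(α-1, i-1)/(i·C(Λ,j)) equals (C(Λ,j) - C(Λ-α,j))/(α·C(Λ,j)), where C(n,k) denotes the binomial coefficient with the convention C(n,k)=0 when k<0 or n<k. -/

import Mathlib

/-- Binomial coefficient with integer lower index: vanishes when the lower
index is negative. -/
def chooseZ (n : ℕ) (k : ℤ) : ℕ := if 0 ≤ k then n.choose k.toNat else 0

lemma chooseZ_nonneg (m j i : ℕ) (h : i ≤ j) :
    chooseZ m ((j : ℤ) - i) = m.choose (j - i) := by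
  unfold chooseZ
  rw [if_pos (by omega)]
  congr 1
  omega

lemma chooseZ_neg (m : ℕ) (k : ℤ) (h : k < 0) : chooseZ m k = 0 := if_neg (by omega)

lemma key (m a j : ℕ) :
    m.choose j + ∑ i ∈ Finset.Icc 1 a, chooseZ m ((j : ℤ) - i) * a.choose i
      = (m + a).choose j := by
  have h1 : ∑ i ∈ Finset.Icc 1 a, chooseZ m ((j : ℤ) - i) * a.choose i
      = ∑ i ∈ Finset.Icc 1 (j + a), chooseZ m ((j : ℤ) - i) * a.choose i := by
    apply Finset.sum_subset
    · intro x hx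
      simp only [Finset.mem_Icc] at *
      omega
    · intro x hx hx'
      simp only [Finset.mem_Icc] at *
      have : a < x := by omega
      rw [Nat.choose_eq_zero_of_lt this, mul_zero]
  have h2 : ∑ i ∈ Finset.Icc 1 j, m.choose (j - i) * a.choose i
      = ∑ i ∈ Finset.Icc 1 (j + a), chooseZ m ((j : ℤ) - i) * a.choose i := by
    rw [← Finset.sum_subset (Finset.Icc_subset_Icc_right (by omega) :
        Finset.Icc 1 j ⊆ Finset.Icc 1 (j + a))]
    · apply Finset.sum_congr rfl
      intro x hx
      simp only [Finset.mem_Icc] at hx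
      rw [chooseZ_nonneg m j x hx.2]
    · intro x hx hx'
      simp only [Finset.mem_Icc] at *
      rw [chooseZ_neg m _ (by push_cast; omega), zero_mul]
  rw [h1, ← h2]
  rw [show m + a = a + m by omega, Nat.add_choose_eq,
    Finset.Nat.sum_antidiagonal_eq_sum_range_succ_mk, Finset.sum_range_succ']
  have h3 : ∑ i ∈ Finset.Icc 1 j, m.choose (j - i) * a.choose i
      = ∑ i ∈ Finset.range j, a.choose (i + 1) * m.choose (j - (i + 1)) := by
    rw [show Finset.Icc 1 j = Finset.Ico 1 (j + 1) by rfl, Finset.sum_Ico_eq_sum_range]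
    apply Finset.sum_congr (by congr 1)
    intro x hx
    rw [mul_comm]
    congr 2 <;> omega
  rw [h3]
  simp [add_comm]

theorem stmt_0 (Λ α j : ℕ) (hΛ : 0 < Λ) (hα : 0 < α) (hj : 0 < j) (hαΛ : α ≤ Λ) :
    ∑ i ∈ Finset.Icc 1 α,
      ((chooseZ (Λ - α) ((j : ℤ) - i) * Nat.choose (α - 1) (i - 1) : ℚ) /
        (i * Nat.choose Λ j)) =
      ((Nat.choose Λ j : ℚ) - Nat.choose (Λ - α) j) / (α * Nat.choose Λ j) := by
  by_cases hC : Λ.choose j = 0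
  · simp [hC]
  have hm : Λ - α + α = Λ := by omega
  have hkey := key (Λ - α) α j
  rw [hm] at hkey
  have hCQ : (Λ.choose j : ℚ) ≠ 0 := Nat.cast_ne_zero.mpr hC
  have hαQ : (α : ℚ) ≠ 0 := Nat.cast_ne_zero.mpr (by omega)
  have hsum : ∑ i ∈ Finset.Icc 1 α,
      ((chooseZ (Λ - α) ((j : ℤ) - i) * Nat.choose (α - 1) (i - 1) : ℚ) /
        (i * Nat.choose Λ j)) =
      ∑ i ∈ Finset.Icc 1 α,
      ((chooseZ (Λ - α) ((j : ℤ) - i) * Nat.choose α i : ℚ) /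
        (α * Nat.choose Λ j)) := by
    apply Finset.sum_congr rfl
    intro i hi
    simp only [Finset.mem_Icc] at hi
    have hiQ : (i : ℚ) ≠ 0 := Nat.cast_ne_zero.mpr (by omega)
    rw [div_eq_div_iff (by positivity) (by positivity)]
    have hid : α * Nat.choose (α - 1) (i - 1) = Nat.choose α i * i := by
      have := Nat.add_one_mul_choose_eq (α - 1) (i - 1)
      rw [show α - 1 + 1 = α by omega, show i - 1 + 1 = i by omega] at this
      exact this
    have : ((α : ℚ) * Nat.choose (α - 1) (i - 1)) = (Nat.choose α i : ℚ) * i := by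
      exact_mod_cast congrArg (Nat.cast : ℕ → ℚ) hid
    linear_combination ((chooseZ (Λ - α) ((j : ℤ) - i) : ℚ) * (Λ.choose j : ℚ)) * this
  rw [hsum, ← Finset.sum_div]
  congr 1
  have : ((Λ - α).choose j : ℚ) +
      ∑ i ∈ Finset.Icc 1 α, ((chooseZ (Λ - α) ((j : ℤ) - i) : ℚ) * Nat.choose α i)
      = (Λ.choose j : ℚ) := by exact_mod_cast congrArg (Nat.cast : ℕ → ℚ) hkey
  linarith [this]
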